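/- Let 0 < γ, and for h ∈ [0,1] set K(h) = (σ²/(2γ)) · (e^{−γh} + e^{−γ(1−h)})/(1 − e^{−γ}). Then for s ≤ t and x ∈ [0,1] with x ∉ (s,t) (and all of s,t,x in [0,1]): (1/2)K(|s−x|) − K(|(s+t)/2 − x|) + (1/2)K(|t−x|) = 2 sinh²(γ(t−s)/4) · K(|(s+t)/2 − x|). -/
import Mathlib


open Real

/-- Covariance kernel of the cyclically stationary Ornstein–Uhlenbeck process. -/
noncomputable def ouKernel (γ σ : ℝ) (h : ℝ) : ℝ :=
  σ ^ 2 / (2 * γ) * (Real.exp (-γ * h) + Real.exp (-γ * (1 - h))) / (1 - Real.exp (-γ))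

lemma ou_kernel_key (γ σ m d : ℝ) (hγ : 0 < γ) :
    (1/2) * ouKernel γ σ (m - d) - ouKernel γ σ m + (1/2) * ouKernel γ σ (m + d)
      = 2 * Real.sinh (γ * d / 2) ^ 2 * ouKernel γ σ m := by
  have hC : 1 - Real.exp (-γ) ≠ 0 := by
    have := Real.exp_lt_one_iff.mpr (by linarith : -γ < 0)
    linarith
  unfold ouKernel
  rw [Real.sinh_eq]
  have e1 : -γ * (m - d) = -γ * m + γ * d / 2 + γ * d / 2 := by ring
  have e2 : -γ * (1 - (m - d)) = -γ * (1 - m) + (-(γ * d / 2)) + (-(γ * d / 2)) := by ring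
  have e3 : -γ * (m + d) = -γ * m + (-(γ * d / 2)) + (-(γ * d / 2)) := by ring
  have e4 : -γ * (1 - (m + d)) = -γ * (1 - m) + γ * d / 2 + γ * d / 2 := by ring
  rw [e1, e2, e3, e4, Real.exp_add, Real.exp_add, Real.exp_add, Real.exp_add,
    Real.exp_add, Real.exp_add, Real.exp_add, Real.exp_add, Real.exp_neg]
  have hu : Real.exp (γ * d / 2) ≠ 0 := Real.exp_ne_zero _
  field_simp
  ring

theorem ou_kernel_second_difference (γ σ s t x : ℝ) (hγ : 0 < γ) (hσ : 0 < σ)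
    (hst : s ≤ t) (hs : s ∈ Set.Icc (0 : ℝ) 1) (ht : t ∈ Set.Icc (0 : ℝ) 1)
    (hx : x ∈ Set.Icc (0 : ℝ) 1) (hx' : x ∉ Set.Ioo s t) :
    (1 / 2) * ouKernel γ σ |s - x| - ouKernel γ σ |(s + t) / 2 - x| +
        (1 / 2) * ouKernel γ σ |t - x| =
      2 * Real.sinh (γ * (t - s) / 4) ^ 2 * ouKernel γ σ |(s + t) / 2 - x| := by
  have hcase : x ≤ s ∨ t ≤ x := by
    by_contra h
    push_neg at h
    exact hx' ⟨h.1, h.2⟩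
  rcases hcase with h | h
  · have a1 : |s - x| = (s + t) / 2 - x - (t - s) / 2 := by
      rw [abs_of_nonneg (by linarith)]; ring
    have a2 : |t - x| = (s + t) / 2 - x + (t - s) / 2 := by
      rw [abs_of_nonneg (by linarith)]; ring
    have a3 : |(s + t) / 2 - x| = (s + t) / 2 - x := abs_of_nonneg (by linarith)
    rw [a1, a2, a3]
    have := ou_kernel_key γ σ ((s + t) / 2 - x) ((t - s) / 2) hγ
    rw [show γ * ((t - s) / 2) / 2 = γ * (t - s) / 4 by ring] at this
    linarith
  · have a1 : |s - x| = x - (s + t) / 2 + (t - s) / 2 := by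
      rw [abs_of_nonpos (by linarith)]; ring
    have a2 : |t - x| = x - (s + t) / 2 - (t - s) / 2 := by
      rw [abs_of_nonpos (by linarith)]; ring
    have a3 : |(s + t) / 2 - x| = x - (s + t) / 2 := by
      rw [abs_of_nonpos (by linarith)]; ring
    rw [a1, a2, a3]
    have := ou_kernel_key γ σ (x - (s + t) / 2) ((t - s) / 2) hγ
    rw [show γ * ((t - s) / 2) / 2 = γ * (t - s) / 4 by ring] at this
    linarith
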